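/- Let P be a real-valued C^2 function on [a,b] such that P' is monotonic on [a,b] and |P'(x)| ≥ M > 0 for all x in [a,b], and let ψ be a complex-valued C^1 function on [a,b]. Then there is an absolute constant c such that |∫_a^b e^{iP(x)} ψ(x) dx| ≤ c M^{-1} (|ψ(b)| + ∫_a^b |ψ'(x)| dx). -/

import Mathlib

open Set Complex intervalIntegral MeasureTheory Filter

private lemma slope_nonneg' {a b : ℝ} (hab : a < b) {g : ℝ → ℝ} {d x : ℝ}
    (hx : x ∈ Icc a b) (hd : HasDerivWithinAt g d (Icc a b) x)
    (hm : MonotoneOn g (Icc a b)) : 0 ≤ d := by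
  have ht := hasDerivWithinAt_iff_tendsto_slope.1 hd
  rcases lt_or_ge x b with hxb | hxb
  · have hsub : Ioo x b ⊆ Icc a b \ {x} := fun y hy =>
      ⟨⟨hx.1.trans hy.1.le, hy.2.le⟩, ne_of_gt hy.1⟩
    have htt : Filter.Tendsto (slope g x) (nhdsWithin x (Ioo x b)) (nhds d) :=
      ht.mono_left (nhdsWithin_mono x hsub)
    have hne : (nhdsWithin x (Ioo x b)).NeBot := by
      rw [← mem_closure_iff_nhdsWithin_neBot, closure_Ioo (ne_of_lt hxb)]
      exact ⟨le_refl x, hxb.le⟩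
    refine ge_of_tendsto htt ?_
    filter_upwards [self_mem_nhdsWithin] with y hy
    have h1 : g x ≤ g y := hm hx ⟨hx.1.trans hy.1.le, hy.2.le⟩ hy.1.le
    have hpos : 0 < y - x := sub_pos.2 hy.1
    rw [slope_def_field]
    exact div_nonneg (by linarith) hpos.le
  · have hax : a < x := lt_of_lt_of_le hab hxb
    have hsub : Ioo a x ⊆ Icc a b \ {x} := fun y hy =>
      ⟨⟨hy.1.le, hy.2.le.trans hx.2⟩, ne_of_lt hy.2⟩
    have htt : Filter.Tendsto (slope g x) (nhdsWithin x (Ioo a x)) (nhds d) :=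
      ht.mono_left (nhdsWithin_mono x hsub)
    have hne : (nhdsWithin x (Ioo a x)).NeBot := by
      rw [← mem_closure_iff_nhdsWithin_neBot, closure_Ioo (ne_of_lt hax)]
      exact ⟨hax.le, le_refl x⟩
    refine ge_of_tendsto htt ?_
    filter_upwards [self_mem_nhdsWithin] with y hy
    have h1 : g y ≤ g x := hm ⟨hy.1.le, hy.2.le.trans hx.2⟩ hx hy.2.le
    have hneg : y - x < 0 := sub_neg.2 hy.2
    rw [slope_def_field]
    exact div_nonneg_of_nonpos (by linarith) hneg.le

private lemma hdw_ofReal {f : ℝ → ℝ} {u z : ℝ} {s : Set ℝ} (hf : HasDerivWithinAt f u s z) :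
    HasDerivWithinAt (fun y : ℝ => ((f y : ℂ))) (u : ℂ) s z := by
  exact hf.ofReal_comp

theorem van_der_corput_first : ∃ c : ℝ, 0 < c ∧
    ∀ (a b M : ℝ) (P : ℝ → ℝ) (ψ : ℝ → ℂ), a ≤ b → 0 < M →
      ContDiffOn ℝ 2 P (Set.Icc a b) →
      (MonotoneOn (derivWithin P (Set.Icc a b)) (Set.Icc a b) ∨
        AntitoneOn (derivWithin P (Set.Icc a b)) (Set.Icc a b)) →
      (∀ x ∈ Set.Icc a b, M ≤ |derivWithin P (Set.Icc a b) x|) →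
      ContDiffOn ℝ 1 ψ (Set.Icc a b) →
      ‖∫ x in a..b, Complex.exp (Complex.I * (P x : ℂ)) * ψ x‖ ≤
        c * M⁻¹ * (‖ψ b‖ + ∫ x in a..b, ‖derivWithin ψ (Set.Icc a b) x‖) := by
  refine ⟨4, by norm_num, ?_⟩
  intro a b M P ψ hab hM hP hmono hMg hψ
  rcases eq_or_lt_of_le hab with rfl | hab'
  · simp only [intervalIntegral.integral_same, norm_zero]
    positivity
  have hMinv : 0 < M⁻¹ := inv_pos.2 hM
  set s := Icc a b with hsdef
  have husub : uIcc a b = Icc a b := uIcc_of_le hab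
  have hus : UniqueDiffOn ℝ s := uniqueDiffOn_Icc hab'
  set g := derivWithin P s with hgdef
  have hg1 : ContDiffOn ℝ 1 g s := hP.derivWithin hus (by norm_num)
  have hgc : ContinuousOn g s := hg1.continuousOn
  set g2 := derivWithin g s with hg2def
  have hg2c : ContinuousOn g2 s := hg1.continuousOn_derivWithin hus le_rfl
  have hgd : ∀ x ∈ s, HasDerivWithinAt g (g2 x) s x := fun x hx =>
    (hg1.differentiableOn one_ne_zero x hx).hasDerivWithinAt
  have hPd : ∀ x ∈ s, HasDerivWithinAt P (g x) s x := fun x hx =>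
    (hP.differentiableOn (by norm_num) x hx).hasDerivWithinAt
  have hψc : ContinuousOn ψ s := hψ.continuousOn
  set ψ' := derivWithin ψ s with hψ'def
  have hψ'c : ContinuousOn ψ' s := hψ.continuousOn_derivWithin hus le_rfl
  have hψd : ∀ x ∈ s, HasDerivWithinAt ψ (ψ' x) s x := fun x hx =>
    (hψ.differentiableOn one_ne_zero x hx).hasDerivWithinAt
  have hgM : ∀ x ∈ s, M ≤ |g x| := hMg
  have hgne : ∀ x ∈ s, g x ≠ 0 := by
    intro x hx h
    have := hgM x hx
    rw [h, abs_zero] at this; linarith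
  have hginv : ∀ x ∈ s, |g x|⁻¹ ≤ M⁻¹ := fun x hx => inv_anti₀ hM (hgM x hx)
  -- complex helper functions
  set q : ℝ → ℂ := fun x => Complex.I * (g x : ℂ) with hqdef
  have hqne : ∀ x ∈ s, q x ≠ 0 := fun x hx =>
    mul_ne_zero Complex.I_ne_zero (by exact_mod_cast hgne x hx)
  have hqnorm : ∀ x, ‖q x‖ = |g x| := by
    intro x; rw [norm_mul, Complex.norm_I, one_mul, Complex.norm_real, Real.norm_eq_abs]
  have hqd : ∀ x ∈ s, HasDerivWithinAt q (Complex.I * (g2 x : ℂ)) s x := fun x hx =>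
    (hdw_ofReal (hgd x hx)).const_mul Complex.I
  set u : ℝ → ℂ := fun x => Complex.exp (Complex.I * (P x : ℂ)) with hudef
  set u' : ℝ → ℂ := fun x => Complex.exp (Complex.I * (P x : ℂ)) * q x with hu'def
  have hud : ∀ x ∈ s, HasDerivWithinAt u (u' x) s x := fun x hx =>
    ((hdw_ofReal (hPd x hx)).const_mul Complex.I).cexp
  have hu1 : ∀ x, ‖u x‖ = 1 := by
    intro x
    show ‖Complex.exp (Complex.I * (P x : ℂ))‖ = 1
    rw [mul_comm]; exact Complex.norm_exp_ofReal_mul_I _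
  set v : ℝ → ℂ := fun x => ψ x / q x with hvdef
  set v' : ℝ → ℂ := fun x =>
    (ψ' x * q x - ψ x * (Complex.I * (g2 x : ℂ))) / (q x) ^ 2 with hv'def
  have hvd : ∀ x ∈ s, HasDerivWithinAt v (v' x) s x := by
    intro x hx
    exact (hψd x hx).div (hqd x hx) (hqne x hx)
  -- continuity facts
  have hgCc : ContinuousOn (fun x => ((g x : ℂ))) s :=
    Complex.continuous_ofReal.comp_continuousOn hgc
  have hg2Cc : ContinuousOn (fun x => ((g2 x : ℂ))) s :=
    Complex.continuous_ofReal.comp_continuousOn hg2c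
  have hqc : ContinuousOn q s := continuousOn_const.mul hgCc
  have huc : ContinuousOn u s := Complex.continuous_exp.comp_continuousOn
    (continuousOn_const.mul (Complex.continuous_ofReal.comp_continuousOn hP.continuousOn))
  have hu'c : ContinuousOn u' s := huc.mul hqc
  have hv'c : ContinuousOn v' s := by
    apply ContinuousOn.div
    · exact (hψ'c.mul hqc).sub (hψc.mul (continuousOn_const.mul hg2Cc))
    · exact hqc.pow 2
    · exact fun x hx => pow_ne_zero 2 (hqne x hx)
  have hu'int : IntervalIntegrable u' volume a b := hu'c.intervalIntegrable_of_Icc hab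
  have hv'int : IntervalIntegrable v' volume a b := hv'c.intervalIntegrable_of_Icc hab
  have hψ'nint : IntervalIntegrable (fun x => ‖ψ' x‖) volume a b :=
    (hψ'c.norm).intervalIntegrable_of_Icc hab
  -- the constant K
  set K : ℝ := ‖ψ b‖ + ∫ x in a..b, ‖ψ' x‖ with hKdef
  have hInn : 0 ≤ ∫ x in a..b, ‖ψ' x‖ :=
    intervalIntegral.integral_nonneg hab (fun x _ => norm_nonneg _)
  have hK0 : 0 ≤ K := add_nonneg (norm_nonneg _) hInn
  have hψK : ∀ x ∈ s, ‖ψ x‖ ≤ K := by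
    intro x hx
    have hxb : x ≤ b := hx.2
    have hfb : ∫ t in x..b, ψ' t = ψ b - ψ x := by
      apply intervalIntegral.integral_eq_sub_of_hasDeriv_right_of_le hxb
        (hψc.mono (Icc_subset_Icc hx.1 le_rfl))
      · intro t ht
        have hts : t ∈ s := ⟨(lt_of_le_of_lt hx.1 ht.1).le, ht.2.le⟩
        exact ((hψd t hts).hasDerivAt
          (Icc_mem_nhds (lt_of_le_of_lt hx.1 ht.1) ht.2)).hasDerivWithinAt
      · exact (hψ'c.mono (Icc_subset_Icc hx.1 le_rfl)).intervalIntegrable_of_Icc hxb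
    have h1 : ‖ψ x‖ ≤ ‖ψ b‖ + ‖∫ t in x..b, ψ' t‖ := by
      have hx2 : ψ x = ψ b - ∫ t in x..b, ψ' t := by rw [hfb]; ring
      rw [hx2]
      exact norm_sub_le _ _
    have h2 : ‖∫ t in x..b, ψ' t‖ ≤ ∫ t in x..b, ‖ψ' t‖ :=
      intervalIntegral.norm_integral_le_integral_norm hxb
    have h3 : (∫ t in x..b, ‖ψ' t‖) ≤ ∫ t in a..b, ‖ψ' t‖ := by
      apply intervalIntegral.integral_mono_interval hx.1 hxb le_rfl
      · exact ae_of_all _ (fun t => norm_nonneg _)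
      · exact hψ'nint
    calc ‖ψ x‖ ≤ ‖ψ b‖ + ‖∫ t in x..b, ψ' t‖ := h1
      _ ≤ ‖ψ b‖ + ∫ t in x..b, ‖ψ' t‖ := by linarith
      _ ≤ K := by rw [hKdef]; linarith
  -- integration by parts
  have hibp : ∫ x in a..b, u x * v' x =
      u b * v b - u a * v a - ∫ x in a..b, u' x * v x := by
    apply intervalIntegral.integral_mul_deriv_eq_deriv_mul_of_hasDerivWithinAt
    · rw [husub]; exact hud
    · rw [husub]; exact hvd
    · exact hu'int
    · exact hv'int
  have hEq : (∫ x in a..b, Complex.exp (Complex.I * (P x : ℂ)) * ψ x) =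
      ∫ x in a..b, u' x * v x := by
    apply intervalIntegral.integral_congr
    intro x hx
    rw [husub] at hx
    have hq := hqne x hx
    show Complex.exp (Complex.I * (P x : ℂ)) * ψ x =
      (Complex.exp (Complex.I * (P x : ℂ)) * q x) * (ψ x / q x)
    field_simp
  have hmain : (∫ x in a..b, Complex.exp (Complex.I * (P x : ℂ)) * ψ x) =
      u b * v b - u a * v a - ∫ x in a..b, u x * v' x := by
    rw [hEq, hibp]; ring
  -- bound the boundary terms
  have hvb : ∀ x ∈ s, ‖v x‖ ≤ ‖ψ x‖ * M⁻¹ := by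
    intro x hx
    show ‖ψ x / q x‖ ≤ ‖ψ x‖ * M⁻¹
    rw [norm_div, hqnorm, div_eq_mul_inv]
    exact mul_le_mul_of_nonneg_left (hginv x hx) (norm_nonneg _)
  have ha_mem : a ∈ s := left_mem_Icc.2 hab
  have hb_mem : b ∈ s := right_mem_Icc.2 hab
  -- pointwise bound on v'
  set h : ℝ → ℝ := fun x => |g2 x| / (g x) ^ 2 with hhdef
  have hhc : ContinuousOn h s :=
    (hg2c.abs).div (hgc.pow 2) (fun x hx => pow_ne_zero 2 (hgne x hx))
  have hhint : IntervalIntegrable h volume a b := hhc.intervalIntegrable_of_Icc hab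
  have hv'bound : ∀ x ∈ s, ‖v' x‖ ≤ ‖ψ' x‖ * M⁻¹ + K * h x := by
    intro x hx
    have hgx : (0 : ℝ) < |g x| := lt_of_lt_of_le hM (hgM x hx)
    have hIg2 : ‖Complex.I * ((g2 x : ℝ) : ℂ)‖ = |g2 x| := by
      rw [norm_mul, Complex.norm_I, one_mul, Complex.norm_real, Real.norm_eq_abs]
    have step : ‖v' x‖ =
        ‖ψ' x * q x - ψ x * (Complex.I * (g2 x : ℂ))‖ / |g x| ^ 2 := by
      show ‖(ψ' x * q x - ψ x * (Complex.I * (g2 x : ℂ))) / (q x) ^ 2‖ = _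
      rw [norm_div, norm_pow, hqnorm]
    have num_le : ‖ψ' x * q x - ψ x * (Complex.I * (g2 x : ℂ))‖ ≤
        ‖ψ' x‖ * |g x| + ‖ψ x‖ * |g2 x| := by
      calc ‖ψ' x * q x - ψ x * (Complex.I * (g2 x : ℂ))‖
          ≤ ‖ψ' x * q x‖ + ‖ψ x * (Complex.I * (g2 x : ℂ))‖ := norm_sub_le _ _
        _ = ‖ψ' x‖ * |g x| + ‖ψ x‖ * |g2 x| := by
            rw [norm_mul, hqnorm, norm_mul, hIg2]
    have hccc : |g x| / |g x| ^ 2 = |g x|⁻¹ := by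
      rw [sq, div_mul_eq_div_div_swap, div_self hgx.ne', one_div]
    have hsplit : (‖ψ' x‖ * |g x| + ‖ψ x‖ * |g2 x|) / |g x| ^ 2 =
        ‖ψ' x‖ * |g x|⁻¹ + ‖ψ x‖ * (|g2 x| / |g x| ^ 2) := by
      rw [add_div, mul_div_assoc, mul_div_assoc, hccc]
    have hb1 : ‖ψ' x‖ * |g x|⁻¹ ≤ ‖ψ' x‖ * M⁻¹ :=
      mul_le_mul_of_nonneg_left (hginv x hx) (norm_nonneg _)
    have hb2 : ‖ψ x‖ * (|g2 x| / |g x| ^ 2) ≤ K * h x := by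
      rw [_root_.sq_abs]
      exact mul_le_mul (hψK x hx) le_rfl
        (div_nonneg (abs_nonneg _) (by positivity)) hK0
    calc ‖v' x‖ = ‖ψ' x * q x - ψ x * (Complex.I * (g2 x : ℂ))‖ / |g x| ^ 2 := step
      _ ≤ (‖ψ' x‖ * |g x| + ‖ψ x‖ * |g2 x|) / |g x| ^ 2 := by
          gcongr
      _ = ‖ψ' x‖ * |g x|⁻¹ + ‖ψ x‖ * (|g2 x| / |g x| ^ 2) := hsplit
      _ ≤ ‖ψ' x‖ * M⁻¹ + K * h x := add_le_add hb1 hb2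
  -- ∫ h ≤ 2 M⁻¹
  have hIh : (∫ x in a..b, h x) ≤ 2 * M⁻¹ := by
    rcases hmono with hm | hm
    · have hg2nn : ∀ x ∈ s, 0 ≤ g2 x := fun x hx =>
        slope_nonneg' hab' hx (hgd x hx) hm
      have hEqh : (∫ x in a..b, h x) = ∫ x in a..b, g2 x / (g x) ^ 2 := by
        apply intervalIntegral.integral_congr
        intro x hx
        rw [husub] at hx
        show |g2 x| / (g x) ^ 2 = g2 x / (g x) ^ 2
        rw [_root_.abs_of_nonneg (hg2nn x hx)]
      have hftc : (∫ x in a..b, g2 x / (g x) ^ 2) = (g a)⁻¹ - (g b)⁻¹ := by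
        have heq2 : (∫ x in a..b, g2 x / (g x) ^ 2) = (-(g b)⁻¹) - (-(g a)⁻¹) := by
          apply intervalIntegral.integral_eq_sub_of_hasDeriv_right_of_le hab
            ((hgc.inv₀ hgne).neg)
          · intro t ht
            have hts : t ∈ s := ⟨ht.1.le, ht.2.le⟩
            have hd : HasDerivWithinAt (fun x => -(g x)⁻¹) (g2 t / (g t) ^ 2) s t := by
              have := ((hgd t hts).inv (hgne t hts)).neg
              simpa only [neg_div, neg_neg, Pi.neg_def, Pi.inv_def] using this
            exact (hd.hasDerivAt (Icc_mem_nhds ht.1 ht.2)).hasDerivWithinAt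
          · exact ((hg2c.div (hgc.pow 2)
              (fun x hx => pow_ne_zero 2 (hgne x hx))).intervalIntegrable_of_Icc hab)
        rw [heq2]; ring
      rw [hEqh, hftc]
      have h1 : |(g a)⁻¹| ≤ M⁻¹ := by rw [abs_inv]; exact hginv a ha_mem
      have h2 : |(g b)⁻¹| ≤ M⁻¹ := by rw [abs_inv]; exact hginv b hb_mem
      calc (g a)⁻¹ - (g b)⁻¹ ≤ |(g a)⁻¹ - (g b)⁻¹| := le_abs_self _
        _ ≤ |(g a)⁻¹| + |(g b)⁻¹| := abs_sub _ _
        _ ≤ 2 * M⁻¹ := by linarith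
    · have hg2np : ∀ x ∈ s, g2 x ≤ 0 := by
        intro x hx
        have hneg : HasDerivWithinAt (fun y => -g y) (-g2 x) s x := (hgd x hx).neg
        have := slope_nonneg' hab' hx hneg hm.neg
        linarith
      have hEqh : (∫ x in a..b, h x) = ∫ x in a..b, -g2 x / (g x) ^ 2 := by
        apply intervalIntegral.integral_congr
        intro x hx
        rw [husub] at hx
        show |g2 x| / (g x) ^ 2 = -g2 x / (g x) ^ 2
        rw [_root_.abs_of_nonpos (hg2np x hx)]
      have hftc : (∫ x in a..b, -g2 x / (g x) ^ 2) = (g b)⁻¹ - (g a)⁻¹ := by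
        apply intervalIntegral.integral_eq_sub_of_hasDeriv_right_of_le hab
          (hgc.inv₀ hgne)
        · intro t ht
          have hts : t ∈ s := ⟨ht.1.le, ht.2.le⟩
          have hd : HasDerivWithinAt (fun x => (g x)⁻¹) (-g2 t / (g t) ^ 2) s t :=
            (hgd t hts).inv (hgne t hts)
          exact (hd.hasDerivAt (Icc_mem_nhds ht.1 ht.2)).hasDerivWithinAt
        · exact (((hg2c.neg).div (hgc.pow 2)
            (fun x hx => pow_ne_zero 2 (hgne x hx))).intervalIntegrable_of_Icc hab)
      rw [hEqh, hftc]
      have h1 : |(g a)⁻¹| ≤ M⁻¹ := by rw [abs_inv]; exact hginv a ha_mem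
      have h2 : |(g b)⁻¹| ≤ M⁻¹ := by rw [abs_inv]; exact hginv b hb_mem
      calc (g b)⁻¹ - (g a)⁻¹ ≤ |(g b)⁻¹ - (g a)⁻¹| := le_abs_self _
        _ ≤ |(g b)⁻¹| + |(g a)⁻¹| := abs_sub _ _
        _ ≤ 2 * M⁻¹ := by linarith
  -- bound ∫ ‖v'‖
  have hIv' : (∫ x in a..b, ‖v' x‖) ≤ M⁻¹ * (∫ x in a..b, ‖ψ' x‖) + K * (2 * M⁻¹) := by
    have hb1 : (∫ x in a..b, ‖v' x‖) ≤ ∫ x in a..b, (‖ψ' x‖ * M⁻¹ + K * h x) := by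
      apply intervalIntegral.integral_mono_on hab
        ((hv'c.norm).intervalIntegrable_of_Icc hab)
      · exact ((hψ'c.norm.mul continuousOn_const).add
          (continuousOn_const.mul hhc)).intervalIntegrable_of_Icc hab
      · exact hv'bound
    have hb2 : (∫ x in a..b, (‖ψ' x‖ * M⁻¹ + K * h x)) =
        M⁻¹ * (∫ x in a..b, ‖ψ' x‖) + K * (∫ x in a..b, h x) := by
      rw [intervalIntegral.integral_add
        (hψ'nint.mul_const M⁻¹) (hhint.const_mul K)]
      rw [intervalIntegral.integral_const_mul]
      congr 1
      rw [← intervalIntegral.integral_const_mul]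
      apply intervalIntegral.integral_congr
      intro x _; ring
    have hb3 : K * (∫ x in a..b, h x) ≤ K * (2 * M⁻¹) :=
      mul_le_mul_of_nonneg_left hIh hK0
    linarith
  -- final assembly
  rw [hmain]
  have hnormint : ‖∫ x in a..b, u x * v' x‖ ≤ ∫ x in a..b, ‖v' x‖ := by
    calc ‖∫ x in a..b, u x * v' x‖ ≤ ∫ x in a..b, ‖u x * v' x‖ :=
          intervalIntegral.norm_integral_le_integral_norm hab
      _ = ∫ x in a..b, ‖v' x‖ := by
          apply intervalIntegral.integral_congr
          intro x _
          simp only [norm_mul, hu1, one_mul]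
  have hub : ‖u b * v b‖ ≤ ‖ψ b‖ * M⁻¹ := by
    calc ‖u b * v b‖ = ‖u b‖ * ‖v b‖ := norm_mul _ _
      _ = ‖v b‖ := by rw [hu1, one_mul]
      _ ≤ ‖ψ b‖ * M⁻¹ := hvb b hb_mem
  have hua : ‖u a * v a‖ ≤ K * M⁻¹ := by
    calc ‖u a * v a‖ = ‖u a‖ * ‖v a‖ := norm_mul _ _
      _ = ‖v a‖ := by rw [hu1, one_mul]
      _ ≤ ‖ψ a‖ * M⁻¹ := hvb a ha_mem
      _ ≤ K * M⁻¹ := mul_le_mul_of_nonneg_right (hψK a ha_mem) hMinv.le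
  have hIvn : ‖∫ x in a..b, u x * v' x‖ ≤
      M⁻¹ * (∫ x in a..b, ‖ψ' x‖) + K * (2 * M⁻¹) := hnormint.trans hIv'
  calc ‖u b * v b - u a * v a - ∫ x in a..b, u x * v' x‖
      ≤ ‖u b * v b - u a * v a‖ + ‖∫ x in a..b, u x * v' x‖ := norm_sub_le _ _
    _ ≤ ‖u b * v b‖ + ‖u a * v a‖ + ‖∫ x in a..b, u x * v' x‖ := by
        have := norm_sub_le (u b * v b) (u a * v a); linarith
    _ ≤ ‖ψ b‖ * M⁻¹ + K * M⁻¹ + (M⁻¹ * (∫ x in a..b, ‖ψ' x‖) + K * (2 * M⁻¹)) := by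
        linarith
    _ = 4 * M⁻¹ * K := by rw [hKdef]; ring
    _ = 4 * M⁻¹ * (‖ψ b‖ + ∫ x in a..b, ‖ψ' x‖) := by rw [hKdef]
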